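/- Let A be a real m×m matrix diagonalized as V⁻¹AV = diag(λ_1,…,λ_m) with V invertible and λ_i > 0 for all i, let ΔT > 0, and let Q be a real m×m matrix with V⁻¹QV = diag(R_1,…,R_m) for some R_i ∈ ℝ. Set G = (I + ΔT·A)⁻¹ and ρ = max_i (1+ΔTλ_i)·|R_i − 1/(1+ΔTλ_i)|/(ΔTλ_i). Suppose the vectors e^k_n ∈ ℝ^m satisfy e^k_0 = 0 for all k ≥ 1 and e^{k+1}_{n+1} = G·e^{k+1}_n + (Q − G)·e^k_n for all k ≥ 0, n ≥ 0. If B ≥ 0 is such that ‖V⁻¹e^0_n‖_∞ ≤ B for all n, then for every k ≥ 0 and every n, ‖V⁻¹e^k_n‖_∞ ≤ ρ^k·B. -/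

import Mathlib

/-- Convergence of the parareal algorithm for a diagonalizable system with
positive eigenvalues, backward Euler coarse propagator and a fine propagator
diagonalized in the same basis: in the eigenbasis max-norm, the errors
contract with the factor `ρ = max_i K(ΔT λ_i)`. -/
theorem stmt_11 (m : ℕ) (hm : 0 < m) (A V Q : Matrix (Fin m) (Fin m) ℝ)
    (lam R : Fin m → ℝ) (hV : IsUnit V.det)
    (hA : V⁻¹ * A * V = Matrix.diagonal lam) (hlam : ∀ i, 0 < lam i)
    (ΔT : ℝ) (hΔT : 0 < ΔT)
    (hQ : V⁻¹ * Q * V = Matrix.diagonal R)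
    (G : Matrix (Fin m) (Fin m) ℝ) (hG : G = (1 + ΔT • A)⁻¹)
    (ρ : ℝ)
    (hρ : ρ = ⨆ i, (1 + ΔT * lam i) * |R i - 1 / (1 + ΔT * lam i)| / (ΔT * lam i))
    (e : ℕ → ℕ → Fin m → ℝ) (h0 : ∀ k, 1 ≤ k → e k 0 = 0)
    (hrec : ∀ k n, e (k + 1) (n + 1)
      = G.mulVec (e (k + 1) n) + (Q - G).mulVec (e k n))
    (B : ℝ) (hB : 0 ≤ B) (hinit : ∀ n, ‖V⁻¹.mulVec (e 0 n)‖ ≤ B) :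
    ∀ k n, ‖V⁻¹.mulVec (e k n)‖ ≤ ρ ^ k * B := by
  have hdpos : ∀ i, 0 < 1 + ΔT * lam i := fun i => by nlinarith [hlam i]
  have hdne : ∀ i, (1 + ΔT * lam i) ≠ 0 := fun i => (hdpos i).ne'
  set d : Fin m → ℝ := fun i => 1 + ΔT * lam i with hd
  set g : Fin m → ℝ := fun i => (1 + ΔT * lam i)⁻¹ with hgdef
  have hVV : V⁻¹ * V = 1 := Matrix.nonsing_inv_mul V hV
  have hVV' : V * V⁻¹ = 1 := Matrix.mul_nonsing_inv V hV
  have hAeq : A = V * Matrix.diagonal lam * V⁻¹ := by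
    have h := congrArg (fun M => V * M * V⁻¹) hA
    rw [← h, Matrix.mul_assoc V⁻¹ A V, ← Matrix.mul_assoc V,
      hVV', Matrix.one_mul, Matrix.mul_assoc, hVV', Matrix.mul_one]
  have h1 : (1 + ΔT • A) = V * Matrix.diagonal d * V⁻¹ := by
    have hdiag : Matrix.diagonal d = 1 + ΔT • Matrix.diagonal lam := by
      rw [← Matrix.diagonal_one, ← Matrix.diagonal_smul, ← Matrix.diagonal_add]
      rfl
    rw [hdiag, hAeq, Matrix.mul_add, Matrix.add_mul, Matrix.mul_one, hVV',
      Matrix.mul_smul, Matrix.smul_mul]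
  have hGdiag : G = V * Matrix.diagonal g * V⁻¹ := by
    rw [hG]
    apply Matrix.inv_eq_right_inv
    have hdg : (fun i => d i * g i) = (1 : Fin m → ℝ) := by
      funext i
      simp only [Pi.one_apply, hd, hgdef]
      exact mul_inv_cancel₀ (hdne i)
    rw [h1, show V * Matrix.diagonal d * V⁻¹ * (V * Matrix.diagonal g * V⁻¹)
        = V * (Matrix.diagonal d * (V⁻¹ * V) * Matrix.diagonal g) * V⁻¹ by
      simp only [Matrix.mul_assoc], hVV, Matrix.mul_one,
      Matrix.diagonal_mul_diagonal, hdg,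
      show Matrix.diagonal (1 : Fin m → ℝ) = 1 from rfl, Matrix.mul_one, hVV']
  have hVG : V⁻¹ * G = Matrix.diagonal g * V⁻¹ := by
    rw [hGdiag, ← Matrix.mul_assoc, ← Matrix.mul_assoc, hVV, Matrix.one_mul]
  have hVQ : V⁻¹ * Q = Matrix.diagonal R * V⁻¹ := by
    have h := congrArg (fun M => M * V⁻¹) hQ
    rw [← h, Matrix.mul_assoc, Matrix.mul_assoc, hVV', Matrix.mul_one]
  have hVQG : V⁻¹ * (Q - G) = Matrix.diagonal (fun i => R i - g i) * V⁻¹ := by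
    rw [Matrix.mul_sub, hVG, hVQ, ← Matrix.sub_mul, ← Matrix.diagonal_sub]
  -- componentwise recurrence
  have key : ∀ k n i, V⁻¹.mulVec (e (k + 1) (n + 1)) i
      = g i * V⁻¹.mulVec (e (k + 1) n) i + (R i - g i) * V⁻¹.mulVec (e k n) i := by
    intro k n i
    rw [hrec k n, Matrix.mulVec_add]
    have e1 : V⁻¹.mulVec (G.mulVec (e (k + 1) n)) i
        = g i * V⁻¹.mulVec (e (k + 1) n) i := by
      rw [Matrix.mulVec_mulVec, hVG, ← Matrix.mulVec_mulVec, Matrix.mulVec_diagonal]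
    have e2 : V⁻¹.mulVec ((Q - G).mulVec (e k n)) i
        = (R i - g i) * V⁻¹.mulVec (e k n) i := by
      rw [Matrix.mulVec_mulVec, hVQG, ← Matrix.mulVec_mulVec, Matrix.mulVec_diagonal]
    rw [Pi.add_apply, e1, e2]
  -- properties of ρ
  set K : Fin m → ℝ :=
    fun i => (1 + ΔT * lam i) * |R i - 1 / (1 + ΔT * lam i)| / (ΔT * lam i) with hK
  have hKnn : ∀ i, 0 ≤ K i := by
    intro i
    have := hdpos i
    have := hlam i
    positivity
  have hKle : ∀ i, K i ≤ ρ := by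
    intro i
    rw [hρ]
    exact le_ciSup (Set.Finite.bddAbove (Set.finite_range K)) i
  have hρ0 : 0 ≤ ρ := le_trans (hKnn ⟨0, hm⟩) (hKle ⟨0, hm⟩)
  -- key pointwise inequality: |R i - g i| ≤ (1 - g i) * ρ
  have habs : ∀ i, |R i - g i| ≤ (1 - g i) * ρ := by
    intro i
    have hpos : 0 < ΔT * lam i := mul_pos hΔT (hlam i)
    have h1g : 1 - g i = (ΔT * lam i) / (1 + ΔT * lam i) := by
      rw [hgdef]
      field_simp
      ring
    have h1gnn : 0 ≤ 1 - g i := by rw [h1g]; positivity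
    have hgi : g i = (1 + ΔT * lam i)⁻¹ := rfl
    have hX : |R i - g i| = |R i - 1 / (1 + ΔT * lam i)| := by rw [hgi, one_div]
    have hKival : K i = (1 + ΔT * lam i) * |R i - 1 / (1 + ΔT * lam i)| / (ΔT * lam i) := rfl
    have h2 : (1 - g i) * K i = |R i - 1 / (1 + ΔT * lam i)| := by
      rw [hKival, h1g]
      field_simp
      exact mul_div_cancel_left₀ _ (hlam i).ne'
    rw [hX, ← h2]
    exact mul_le_mul_of_nonneg_left (hKle i) h1gnn
  have hg0 : ∀ i, 0 ≤ g i := fun i => le_of_lt (by rw [hgdef]; exact inv_pos.mpr (hdpos i))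
  have hg1 : ∀ i, g i ≤ 1 := by
    intro i
    rw [hgdef]
    exact inv_le_one_of_one_le₀ (by nlinarith [hlam i])
  -- main induction on k
  intro k
  induction k with
  | zero => intro n; simpa using hinit n
  | succ k ih =>
    have hcomp : ∀ n i, |V⁻¹.mulVec (e (k + 1) n) i| ≤ ρ ^ (k + 1) * B := by
      intro n
      induction n with
      | zero =>
        intro i
        rw [h0 (k + 1) (Nat.le_add_left 1 k), Matrix.mulVec_zero]
        simp only [Pi.zero_apply, abs_zero]
        positivity
      | succ n ihn =>
        intro i
        rw [key k n i]
        have h2 : |V⁻¹.mulVec (e k n) i| ≤ ρ ^ k * B := by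
          calc |V⁻¹.mulVec (e k n) i| = ‖V⁻¹.mulVec (e k n) i‖ := (Real.norm_eq_abs _).symm
            _ ≤ ‖V⁻¹.mulVec (e k n)‖ := norm_le_pi_norm _ i
            _ ≤ ρ ^ k * B := ih n
        have h1' := ihn i
        calc |g i * V⁻¹.mulVec (e (k + 1) n) i + (R i - g i) * V⁻¹.mulVec (e k n) i|
            ≤ |g i * V⁻¹.mulVec (e (k + 1) n) i| + |(R i - g i) * V⁻¹.mulVec (e k n) i| :=
              abs_add_le _ _
          _ = g i * |V⁻¹.mulVec (e (k + 1) n) i| + |R i - g i| * |V⁻¹.mulVec (e k n) i| := by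
              rw [abs_mul, abs_mul, abs_of_nonneg (hg0 i)]
          _ ≤ g i * (ρ ^ (k + 1) * B) + ((1 - g i) * ρ) * (ρ ^ k * B) := by
              apply add_le_add
              · exact mul_le_mul_of_nonneg_left h1' (hg0 i)
              · exact mul_le_mul (habs i) h2 (abs_nonneg _)
                  (mul_nonneg (by linarith [hg1 i]) hρ0)
          _ = ρ ^ (k + 1) * B := by ring
    intro n
    rw [pi_norm_le_iff_of_nonneg (by positivity)]
    intro i
    rw [Real.norm_eq_abs]
    exact hcomp n i
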